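/- Under the standing assumptions, fix q ∈ (2ρ, 1). Let z ∈ ℝ^s, set r = g^δ − K·S_μ(z), and suppose ‖r‖ > τδ. Set τ_n = ‖r‖/δ and q_n = max{q, 2ρ + (1+ρ)/τ_n}, let α > 0 satisfy α‖(CCᵀ + αI)⁻¹r‖ = q_n‖r‖, and set z' = z + WCᵀ(CCᵀ + αI)⁻¹r. Then ‖x − z‖² − ‖x − z'‖² ≥ (8ρ²/(1+2ρ))·‖(CCᵀ + αI)⁻¹r‖·‖r‖; in particular ‖x − z'‖ ≤ ‖x − z‖. -/

import Mathlib

open Matrix Filter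

/-- Soft-thresholding operator acting componentwise:
`S_μ(u)_i = sgn(u_i) · max(|u_i| − μ, 0)`. -/
noncomputable def soft {s : ℕ} (μ : ℝ) (u : EuclideanSpace ℝ (Fin s)) : EuclideanSpace ℝ (Fin s) :=
  WithLp.toLp 2 (fun i => Real.sign (u i) * max (|u i| - μ) 0)

/-- Matrix-vector multiplication as a map between Euclidean spaces. -/
noncomputable def mulVecE {m n : ℕ} (A : Matrix (Fin m) (Fin n) ℝ)
    (v : EuclideanSpace ℝ (Fin n)) : EuclideanSpace ℝ (Fin m) :=
  WithLp.toLp 2 (A.mulVec v)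

/-- The spectral norm of a real matrix: the operator norm induced by Euclidean vector norms. -/
noncomputable def specNorm {m n : ℕ} (A : Matrix (Fin m) (Fin n) ℝ) : ℝ :=
  ‖(Matrix.toEuclideanLin A).toContinuousLinearMap‖

/-- The ℓ¹-norm of a vector. -/
noncomputable def l1norm {s : ℕ} (u : EuclideanSpace ℝ (Fin s)) : ℝ := ∑ i, |u i|

open RealInnerProductSpace

lemma inner_mulVecE {m n : ℕ} (M : Matrix (Fin m) (Fin n) ℝ)
    (u : EuclideanSpace ℝ (Fin n)) (v : EuclideanSpace ℝ (Fin m)) :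
    ⟪mulVecE M u, v⟫ = ⟪u, mulVecE Mᵀ v⟫ := by
  simp only [mulVecE, PiLp.inner_apply, RCLike.inner_apply, conj_trivial, PiLp.toLp_apply,
    Matrix.mulVec, dotProduct, Matrix.transpose_apply]
  simp_rw [Finset.sum_mul, Finset.mul_sum]
  rw [Finset.sum_comm]
  exact Finset.sum_congr rfl fun j _ => Finset.sum_congr rfl fun i _ => by ring

lemma mulVecE_mul {m n k : ℕ} (M : Matrix (Fin m) (Fin n) ℝ) (P : Matrix (Fin n) (Fin k) ℝ)
    (v : EuclideanSpace ℝ (Fin k)) : mulVecE (M * P) v = mulVecE M (mulVecE P v) :=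
  by ext i; simp [mulVecE, Matrix.mulVec_mulVec]

lemma mulVecE_sub {m n : ℕ} (M : Matrix (Fin m) (Fin n) ℝ)
    (u v : EuclideanSpace ℝ (Fin n)) : mulVecE M (u - v) = mulVecE M u - mulVecE M v :=
  by ext i; simp [mulVecE, Matrix.mulVec_sub]

lemma mulVecE_add {m n : ℕ} (M : Matrix (Fin m) (Fin n) ℝ)
    (u v : EuclideanSpace ℝ (Fin n)) : mulVecE M (u + v) = mulVecE M u + mulVecE M v :=
  by ext i; simp [mulVecE, Matrix.mulVec_add]

lemma mulVecE_neg {m n : ℕ} (M : Matrix (Fin m) (Fin n) ℝ)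
    (u : EuclideanSpace ℝ (Fin n)) : mulVecE M (-u) = -mulVecE M u :=
  by ext i; simp [mulVecE, Matrix.mulVec_neg]

lemma addM_mulVecE {m n : ℕ} (M P : Matrix (Fin m) (Fin n) ℝ)
    (u : EuclideanSpace ℝ (Fin n)) : mulVecE (M + P) u = mulVecE M u + mulVecE P u :=
  by ext i; simp [mulVecE, Matrix.add_mulVec]

lemma mulVecE_one {n : ℕ} (u : EuclideanSpace ℝ (Fin n)) :
    mulVecE (1 : Matrix (Fin n) (Fin n) ℝ) u = u :=
  by ext i; simp [mulVecE, Matrix.one_mulVec]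

lemma smulM_mulVecE {n : ℕ} (a : ℝ) (M : Matrix (Fin n) (Fin n) ℝ)
    (u : EuclideanSpace ℝ (Fin n)) : mulVecE (a • M) u = a • mulVecE M u :=
  by ext i; simp [mulVecE, Matrix.smul_mulVec]


/-- Proposition 2 of the paper (single-step monotonicity of the partial error):
under the standing assumptions, one step of the nonstationary iteration satisfies
`‖x − z‖² − ‖x − z'‖² ≥ (8ρ²/(1+2ρ))·‖(CCᵀ + αI)⁻¹r‖·‖r‖`, hence `‖x − z'‖ ≤ ‖x − z‖`. -/
theorem stmt6 {N s : ℕ} (hN : 0 < N) (hs : 0 < s) (hNs : N ≤ s)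
    (A C : Matrix (Fin N) (Fin N) ℝ) (W : Matrix (Fin s) (Fin N) ℝ)
    (hW : Wᵀ * W = (1 : Matrix (Fin N) (Fin N) ℝ))
    (ρ μ δ : ℝ) (hρ0 : 0 < ρ) (hρ1 : ρ < 1 / 2) (hμ : 0 ≤ μ) (hδ : 0 < δ)
    (hi : ∀ v : EuclideanSpace ℝ (Fin N), ‖mulVecE (C - A) v‖ ≤ ρ * ‖mulVecE A v‖)
    (hii : ∀ u : EuclideanSpace ℝ (Fin s), ‖mulVecE (C * Wᵀ) (u - soft μ u)‖ ≤ ρ * δ)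
    (x : EuclideanSpace ℝ (Fin s)) (gδ : EuclideanSpace ℝ (Fin N))
    (hgδ : ‖gδ - mulVecE (A * Wᵀ) x‖ ≤ δ)
    (q : ℝ) (hq0 : 2 * ρ < q) (hq1 : q < 1)
    (z : EuclideanSpace ℝ (Fin s))
    (r : EuclideanSpace ℝ (Fin N)) (hr : r = gδ - mulVecE (A * Wᵀ) (soft μ z))
    (hbig : ‖r‖ > ((1 + 2 * ρ) / (1 - 2 * ρ)) * δ)
    (α : ℝ) (hα : 0 < α)
    (hαeq : α * ‖mulVecE (C * Cᵀ + α • (1 : Matrix (Fin N) (Fin N) ℝ))⁻¹ r‖ =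
      max q (2 * ρ + (1 + ρ) / (‖r‖ / δ)) * ‖r‖)
    (z' : EuclideanSpace ℝ (Fin s))
    (hz' : z' = z + mulVecE (W * Cᵀ * (C * Cᵀ + α • (1 : Matrix (Fin N) (Fin N) ℝ))⁻¹) r) :
    ‖x - z‖ ^ 2 - ‖x - z'‖ ^ 2 ≥
      (8 * ρ ^ 2 / (1 + 2 * ρ)) *
        ‖mulVecE (C * Cᵀ + α • (1 : Matrix (Fin N) (Fin N) ℝ))⁻¹ r‖ * ‖r‖ ∧
    ‖x - z'‖ ≤ ‖x - z‖ := by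
  have h12 : (0:ℝ) < 1 - 2 * ρ := by linarith
  have h12' : (0:ℝ) < 1 + 2 * ρ := by linarith
  set B : Matrix (Fin N) (Fin N) ℝ := C * Cᵀ + α • (1 : Matrix (Fin N) (Fin N) ℝ) with hBdef
  set y : EuclideanSpace ℝ (Fin N) := mulVecE B⁻¹ r with hydef
  have hrpos : 0 < ‖r‖ := lt_trans (by positivity) hbig
  have hCpsd : (C * Cᵀ).PosSemidef := by
    have h := Matrix.posSemidef_self_mul_conjTranspose C
    rwa [Matrix.conjTranspose_eq_transpose_of_trivial] at h
  have hSm : (α • (1 : Matrix (Fin N) (Fin N) ℝ)).PosDef := by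
    rw [Matrix.smul_one_eq_diagonal]
    exact Matrix.posDef_diagonal_iff.mpr fun _ => hα
  have hBpd : B.PosDef := by
    rw [hBdef]; exact Matrix.PosDef.posSemidef_add hCpsd hSm
  have hBdet : IsUnit B.det := hBpd.det_pos.ne'.isUnit
  have hBy : mulVecE B y = r := by
    rw [hydef, ← mulVecE_mul, Matrix.mul_nonsing_inv B hBdet, mulVecE_one]
  clear_value y
  clear_value B
  -- abbreviations
  set Sz : EuclideanSpace ℝ (Fin s) := soft μ z with hSzdef
  clear_value Sz
  set Cy : EuclideanSpace ℝ (Fin N) := mulVecE Cᵀ y with hCydef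
  set v : EuclideanSpace ℝ (Fin s) := mulVecE (W * Cᵀ) y with hvdef
  set Lxz : EuclideanSpace ℝ (Fin N) := mulVecE (C * Wᵀ) (x - z) with hLxzdef
  set e : EuclideanSpace ℝ (Fin N) := gδ - mulVecE (A * Wᵀ) x with hedef
  set d1 : EuclideanSpace ℝ (Fin N) := mulVecE ((C - A) * Wᵀ) (x - Sz) with hd1def
  set d2 : EuclideanSpace ℝ (Fin N) := mulVecE (C * Wᵀ) (Sz - z) with hd2def
  clear_value Cy v Lxz e d1 d2
  have hz'v : z' = z + v := by
    rw [hz', mulVecE_mul, ← hydef, ← hvdef]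
  have hvWCy : v = mulVecE W Cy := by rw [hvdef, mulVecE_mul, ← hCydef]
  -- key1 : ‖v‖² = ‖Cy‖²
  have key1 : ‖v‖ ^ 2 = ‖Cy‖ ^ 2 := by
    rw [← real_inner_self_eq_norm_sq, ← real_inner_self_eq_norm_sq, hvWCy,
      inner_mulVecE, ← mulVecE_mul, hW, mulVecE_one]
  -- key2 : ⟪x - z, v⟫ = ⟪L(x-z), y⟫
  have key2 : ⟪x - z, v⟫ = ⟪Lxz, y⟫ := by
    rw [hLxzdef, inner_mulVecE, Matrix.transpose_mul, Matrix.transpose_transpose, ← hvdef]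
  -- key3 : ⟪r, y⟫ = ‖Cy‖² + α‖y‖²
  have hr_eq : r = mulVecE C Cy + α • y := by
    rw [← hBy, hBdef, addM_mulVecE, smulM_mulVecE, mulVecE_one, mulVecE_mul, ← hCydef]
  have key3 : ⟪r, y⟫ = ‖Cy‖ ^ 2 + α * ‖y‖ ^ 2 := by
    rw [hr_eq, inner_add_left, real_inner_smul_left, inner_mulVecE, ← hCydef,
      real_inner_self_eq_norm_sq, real_inner_self_eq_norm_sq]
  -- decomposition of the residual
  have e3 : mulVecE (A * Wᵀ) (x - Sz) = r - e := by
    rw [mulVecE_sub, hr, hedef]; abel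
  have e2 : mulVecE (C * Wᵀ) (x - Sz) = mulVecE (A * Wᵀ) (x - Sz) + d1 := by
    have hM : A * Wᵀ + (C - A) * Wᵀ = C * Wᵀ := by rw [Matrix.sub_mul]; abel
    rw [hd1def, ← addM_mulVecE, hM]
  have e1 : Lxz = mulVecE (C * Wᵀ) (x - Sz) + d2 := by
    rw [hLxzdef, hd2def, ← mulVecE_add, sub_add_sub_cancel]
  have hw : Lxz - r = d1 + d2 - e := by
    rw [e1, e2, e3]; abel
  -- bounds
  have hbe : ‖e‖ ≤ δ := hgδ
  have hbd1 : ‖d1‖ ≤ ρ * (‖r‖ + δ) := by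
    have h := hi (mulVecE Wᵀ (x - Sz))
    rw [← mulVecE_mul, ← mulVecE_mul, ← hd1def, e3] at h
    have h2 : ‖r - e‖ ≤ ‖r‖ + δ := le_trans (norm_sub_le r e) (by linarith)
    exact le_trans h (mul_le_mul_of_nonneg_left h2 hρ0.le)
  have hbd2 : ‖d2‖ ≤ ρ * δ := by
    have h := hii z
    rw [← hSzdef] at h
    have hneg : d2 = -mulVecE (C * Wᵀ) (z - Sz) := by
      rw [hd2def, ← mulVecE_neg, neg_sub]
    rw [hneg, norm_neg]
    exact h
  have hbw : ‖Lxz - r‖ ≤ ρ * ‖r‖ + (1 + 2 * ρ) * δ := by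
    calc ‖Lxz - r‖ = ‖d1 + d2 - e‖ := by rw [hw]
      _ ≤ ‖d1 + d2‖ + ‖e‖ := norm_sub_le _ _
      _ ≤ ‖d1‖ + ‖d2‖ + ‖e‖ := by linarith [norm_add_le d1 d2]
      _ ≤ ρ * (‖r‖ + δ) + ρ * δ + δ := by linarith
      _ = ρ * ‖r‖ + (1 + 2 * ρ) * δ := by ring
  -- main identity
  have hnormdiff : ‖x - z‖ ^ 2 - ‖x - z'‖ ^ 2 = 2 * ⟪x - z, v⟫ - ‖v‖ ^ 2 := by
    have hx' : x - z' = (x - z) - v := by rw [hz'v]; abel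
    rw [hx']
    have hns := norm_sub_sq_real (x - z) v
    linarith
  have hLsum : r + (Lxz - r) = Lxz := by abel
  have hsplit : ⟪x - z, v⟫ = ⟪r, y⟫ + ⟪Lxz - r, y⟫ := by
    rw [key2, ← inner_add_left, hLsum]
  -- inner product bound
  have hwy : ⟪Lxz - r, y⟫ ≥ -((ρ * ‖r‖ + (1 + 2 * ρ) * δ) * ‖y‖) := by
    have h1 := abs_real_inner_le_norm (Lxz - r) y
    have h2 : ‖Lxz - r‖ * ‖y‖ ≤ (ρ * ‖r‖ + (1 + 2 * ρ) * δ) * ‖y‖ :=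
      mul_le_mul_of_nonneg_right hbw (norm_nonneg y)
    have h3 := neg_abs_le (⟪Lxz - r, y⟫)
    linarith
  -- q_n bound
  set qn : ℝ := max q (2 * ρ + (1 + ρ) / (‖r‖ / δ)) with hqndef
  have hqn : qn * ‖r‖ ≥ 2 * ρ * ‖r‖ + (1 + ρ) * δ := by
    have hle : 2 * ρ + (1 + ρ) / (‖r‖ / δ) ≤ qn := le_max_right _ _
    have heq : (1 + ρ) / (‖r‖ / δ) * ‖r‖ = (1 + ρ) * δ := by
      field_simp
    have h6 := mul_le_mul_of_nonneg_right hle (le_of_lt hrpos)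
    rw [add_mul] at h6
    linarith
  have hαny : α * ‖y‖ ^ 2 = qn * ‖r‖ * ‖y‖ := by
    have h7 : α * ‖y‖ ^ 2 = (α * ‖y‖) * ‖y‖ := by ring
    rw [h7, hαeq]
  have hy0 : (0:ℝ) ≤ ‖y‖ := norm_nonneg y
  -- lower bound on the decrement
  have hD : ‖x - z‖ ^ 2 - ‖x - z'‖ ^ 2 ≥ 2 * ρ * (‖r‖ - δ) * ‖y‖ := by
    have hry : ⟪r, y⟫ ≥ α * ‖y‖ ^ 2 := by linarith [key3, sq_nonneg ‖Cy‖]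
    have k : qn * ‖r‖ - (ρ * ‖r‖ + (1 + 2 * ρ) * δ) - ρ * (‖r‖ - δ) ≥ 0 := by linarith
    have k2' := mul_nonneg k hy0
    rw [hnormdiff, hsplit, key1]
    linarith [k2', key3, hry, hαny, hwy]
  -- final inequality
  have hbig' : (1 + 2 * ρ) * δ < (1 - 2 * ρ) * ‖r‖ := by
    rw [div_mul_eq_mul_div, gt_iff_lt, div_lt_iff₀ h12] at hbig
    linarith
  have hfinal : ‖x - z‖ ^ 2 - ‖x - z'‖ ^ 2 ≥ 8 * ρ ^ 2 / (1 + 2 * ρ) * ‖y‖ * ‖r‖ := by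
    have k2 : 4 * ρ * ‖r‖ ≤ (1 + 2 * ρ) * (‖r‖ - δ) := by linarith [hbig']
    have hq8 : 8 * ρ ^ 2 / (1 + 2 * ρ) * ‖y‖ * ‖r‖ ≤ 2 * ρ * (‖r‖ - δ) * ‖y‖ := by
      rw [div_mul_eq_mul_div, div_mul_eq_mul_div, div_le_iff₀ h12']
      linarith [mul_le_mul_of_nonneg_right k2 (mul_nonneg hρ0.le hy0)]
    linarith
  refine ⟨hfinal, ?_⟩
  have hrhs : (0:ℝ) ≤ 8 * ρ ^ 2 / (1 + 2 * ρ) * ‖y‖ * ‖r‖ :=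
    mul_nonneg (mul_nonneg (div_nonneg (by positivity) h12'.le) hy0) hrpos.le
  refine (pow_le_pow_iff_left₀ (norm_nonneg _) (norm_nonneg _) two_ne_zero).mp ?_
  linarith
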